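/- For the negative feedback walk on the complete (balanced) $b$-ary tree of depth $H$ (each non-leaf node has exactly $b \geq 2$ children), started at the root, the cover time satisfies $T_C \leq 4H \frac{b+1}{b-1} b^H$ almost surely; in particular $\mathbb{E}[T_C] \leq 4H \frac{b+1}{b-1} b^H$. -/

import Mathlib

open Finset
open scoped Classical

/-- `transCount w t i j`: the number of transitions from node `i` to node `j` made by
the trajectory `w` before time `t`. -/
noncomputable def transCount {V : Type*} (w : ℕ → V) (t : ℕ) (i j : V) : ℕ :=
  ((Finset.range t).filter (fun s => w s = i ∧ w (s + 1) = j)).card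

/-- A trajectory `w` is admissible for the negative feedback ("favor least") walk on the
graph with adjacency relation `Adj`: each step goes to a neighbour of the current node
whose prior transition count from the current node is minimal. -/
def IsNegFeedbackWalk {V : Type*} (Adj : V → V → Prop) (w : ℕ → V) : Prop :=
  ∀ t : ℕ, Adj (w t) (w (t + 1)) ∧
    ∀ j : V, Adj (w t) j → transCount w t (w t) (w (t + 1)) ≤ transCount w t (w t) j

/-- Nodes of the complete balanced `b`-ary tree of depth `H`: lists over `Fin b` of
length at most `H` (the empty list is the root, and the parent of a nonempty list is
its tail). -/
def BTree (b H : ℕ) : Type := {l : List (Fin b) // l.length ≤ H}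

/-- Adjacency in the balanced `b`-ary tree: one node is the parent (tail) of the other. -/
def btreeAdj {b H : ℕ} (x y : BTree b H) : Prop :=
  (y.1.tail = x.1 ∧ y.1 ≠ []) ∨ (x.1.tail = y.1 ∧ x.1 ≠ [])

/-- The root of the balanced `b`-ary tree. -/
def btreeRoot (b H : ℕ) : BTree b H := ⟨[], by simp⟩

namespace NFWCover

variable {V : Type*} {b H : ℕ}

lemma tc_succ (w : ℕ → V) (t : ℕ) (i j : V) :
    transCount w (t+1) i j
      = transCount w t i j + if (w t = i ∧ w (t+1) = j) then 1 else 0 := by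
  unfold transCount
  rw [Finset.range_add_one, Finset.filter_insert]
  split
  · rw [Finset.card_insert_of_notMem (by simp)]
  · simp

lemma tc_mono (w : ℕ → V) {t t' : ℕ} (h : t ≤ t') (i j : V) :
    transCount w t i j ≤ transCount w t' i j :=
  Finset.card_le_card (Finset.filter_subset_filter _ (Finset.range_subset_range.2 h))

lemma tc_step_lt (w : ℕ → V) {s t : ℕ} (hst : s < t) (i j : V)
    (h1 : w s = i) (h2 : w (s+1) = j) :
    transCount w s i j + 1 ≤ transCount w t i j := by
  have h := tc_succ w s i j
  rw [if_pos ⟨h1, h2⟩] at h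
  calc transCount w s i j + 1 = transCount w (s+1) i j := h.symm
    _ ≤ transCount w t i j := tc_mono w hst i j

lemma tc_to_unvisited (w : ℕ → V) {t : ℕ} {v : V} (hv : ∀ r ≤ t, w r ≠ v) (i : V) :
    transCount w t i v = 0 := by
  unfold transCount
  rw [Finset.card_eq_zero, Finset.filter_eq_empty_iff]
  intro s hs
  rintro ⟨-, h2⟩
  exact hv (s+1) (Finset.mem_range.1 hs) h2

lemma tc_balance {Adj : V → V → Prop} {w : ℕ → V} (hw : IsNegFeedbackWalk Adj w)
    (t : ℕ) {x y y' : V} (hy : Adj x y) (hy' : Adj x y') :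
    transCount w t x y ≤ transCount w t x y' + 1 := by
  induction t with
  | zero => simp [transCount]
  | succ t ih =>
    rw [tc_succ, tc_succ]
    by_cases hx : w t = x
    · by_cases hyy : w (t+1) = y
      · rw [if_pos ⟨hx, hyy⟩]
        have hmin := (hw t).2 y' (by rw [hx]; exact hy')
        rw [hx, hyy] at hmin
        split <;> omega
      · rw [if_neg (by tauto)]
        split <;> omega
    · rw [if_neg (by tauto), if_neg (by tauto)]
      omega

/-- Telescoping / cut-edge lemma: on a tree, the two directed transition counts
across a cut edge differ exactly by the indicator of the current side. -/
lemma tc_cut {Adj : V → V → Prop} {w : ℕ → V} (hw : IsNegFeedbackWalk Adj w)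
    (S : V → Prop) (a c : V)
    (hSa : ¬ S a) (hSc : S c)
    (hin : ∀ u u', Adj u u' → ¬ S u → S u' → u = a ∧ u' = c)
    (hout : ∀ u u', Adj u u' → S u → ¬ S u' → u = c ∧ u' = a)
    (h0 : ¬ S (w 0)) (t : ℕ) :
    transCount w t a c = transCount w t c a + (if S (w t) then 1 else 0) := by
  induction t with
  | zero => simp [transCount, h0]
  | succ t ih =>
    rw [tc_succ, tc_succ]
    have hadj := (hw t).1
    by_cases h1 : S (w t) <;> by_cases h2 : S (w (t+1))
    · have e1 : ¬ (w t = a ∧ w (t+1) = c) := by rintro ⟨rfl, -⟩; exact hSa h1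
      have e2 : ¬ (w t = c ∧ w (t+1) = a) := by rintro ⟨-, rfl⟩; exact hSa h2
      rw [if_neg e1, if_neg e2, if_pos h2, ih, if_pos h1]
    · obtain ⟨hc', ha'⟩ := hout _ _ hadj h1 h2
      have e1 : ¬ (w t = a ∧ w (t+1) = c) := by rintro ⟨rfl, -⟩; exact hSa h1
      have hcr : w t = c ∧ w (t+1) = a := ⟨hc', ha'⟩
      rw [if_neg e1, if_pos hcr, if_neg h2, ih, if_pos h1]
    · obtain ⟨ha', hc'⟩ := hin _ _ hadj h1 h2
      have e2 : ¬ (w t = c ∧ w (t+1) = a) := by rintro ⟨rfl, -⟩; exact h1 hSc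
      have hcr : w t = a ∧ w (t+1) = c := ⟨ha', hc'⟩
      rw [if_pos hcr, if_neg e2, if_pos h2, ih, if_neg h1]
    · have e1 : ¬ (w t = a ∧ w (t+1) = c) := by rintro ⟨-, rfl⟩; exact h2 hSc
      have e2 : ¬ (w t = c ∧ w (t+1) = a) := by rintro ⟨rfl, -⟩; exact h1 hSc
      rw [if_neg e1, if_neg e2, if_neg h2, ih, if_neg h1]

/-- parent of a node -/
def par (c : BTree b H) : BTree b H :=
  ⟨c.1.tail, by have h := c.2; rw [List.length_tail]; omega⟩

/-- ancestor of `v` obtained by dropping `i` entries -/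
def anc (v : BTree b H) (i : ℕ) : BTree b H :=
  ⟨v.1.drop i, by have h := v.2; rw [List.length_drop]; omega⟩

lemma anc_zero (v : BTree b H) : anc v 0 = v := Subtype.ext List.drop_zero

lemma par_anc (v : BTree b H) (i : ℕ) : par (anc v i) = anc v (i+1) :=
  Subtype.ext List.tail_drop

lemma drop_ne_nil {α : Type*} {l : List α} {k : ℕ} (h : k < l.length) :
    l.drop k ≠ [] := by
  intro hnil
  have := congrArg List.length hnil
  rw [List.length_drop] at this
  simp at this
  omega

/-- the raw subtree cut identity -/
lemma tc_sub_raw {w : ℕ → BTree b H} (hw : IsNegFeedbackWalk btreeAdj w)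
    (h0 : w 0 = btreeRoot b H) (c : BTree b H) (hc : c.1 ≠ []) (t : ℕ) :
    transCount w t (par c) c
      = transCount w t c (par c)
        + (@ite ℕ (c.1 <:+ (w t).1) (Classical.propDecidable _) 1 0) := by
  have hlen : 1 ≤ c.1.length := List.length_pos_iff.2 hc
  apply tc_cut hw (fun u => c.1 <:+ u.1) (par c) c
  · intro hsuf
    have := hsuf.length_le
    have hx : (par c).1 = c.1.tail := rfl
    rw [hx, List.length_tail] at this
    omega
  · exact List.suffix_refl c.1
  · intro u u' hadj hnu hu'
    rcases hadj with ⟨ht, hne⟩ | ⟨ht, hne⟩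
    · obtain ⟨hd, tl, he⟩ := List.exists_cons_of_ne_nil hne
      have htl : tl = u.1 := by rw [he] at ht; exact ht
      subst htl
      rw [he] at hu'
      rcases List.suffix_cons_iff.1 hu' with heq | hsuf
      · refine ⟨?_, ?_⟩
        · apply Subtype.ext
          show u.1 = c.1.tail
          rw [heq, List.tail_cons]
        · exact Subtype.ext (he.trans heq.symm)
      · exact absurd hsuf hnu
    · exact absurd (hu'.trans (ht ▸ List.tail_suffix u.1)) hnu
  · intro u u' hadj hu hnu'
    rcases hadj with ⟨ht, hne⟩ | ⟨ht, hne⟩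
    · exact absurd (hu.trans (ht ▸ List.tail_suffix u'.1)) hnu'
    · obtain ⟨hd, tl, he⟩ := List.exists_cons_of_ne_nil hne
      have htl : tl = u'.1 := by rw [he] at ht; exact ht
      subst htl
      rw [he] at hu
      rcases List.suffix_cons_iff.1 hu with heq | hsuf
      · refine ⟨Subtype.ext (he.trans heq.symm), ?_⟩
        apply Subtype.ext
        show u'.1 = c.1.tail
        rw [heq, List.tail_cons]
      · exact absurd hsuf hnu'
  · rw [h0]
    intro hsuf
    exact hc (List.suffix_nil.1 hsuf)

lemma tc_sub_pos {w : ℕ → BTree b H} (hw : IsNegFeedbackWalk btreeAdj w)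
    (h0 : w 0 = btreeRoot b H) (c : BTree b H) (hc : c.1 ≠ []) (t : ℕ)
    (hs : c.1 <:+ (w t).1) :
    transCount w t (par c) c = transCount w t c (par c) + 1 := by
  have h := tc_sub_raw hw h0 c hc t
  rwa [if_pos hs] at h

lemma tc_sub_neg {w : ℕ → BTree b H} (hw : IsNegFeedbackWalk btreeAdj w)
    (h0 : w 0 = btreeRoot b H) (c : BTree b H) (hc : c.1 ≠ []) (t : ℕ)
    (hs : ¬ c.1 <:+ (w t).1) :
    transCount w t (par c) c = transCount w t c (par c) := by
  have h := tc_sub_raw hw h0 c hc t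
  rwa [if_neg hs, Nat.add_zero] at h

/-- descent: a big count on the chain towards an unvisited `v` is impossible -/
lemma descent {w : ℕ → BTree b H} (hw : IsNegFeedbackWalk btreeAdj w)
    (h0 : w 0 = btreeRoot b H) (v : BTree b H) {t : ℕ}
    (hv : ∀ r ≤ t, w r ≠ v) :
    ∀ i, 1 ≤ i → i ≤ v.1.length → ¬ (v.1.drop (i-1) <:+ (w t).1) →
      i ≤ transCount w t (anc v i) (anc v (i-1)) → False := by
  intro i
  induction i with
  | zero => omega
  | succ k ih =>
    intro _ hle hnsuf hcnt
    simp only [Nat.add_sub_cancel] at hnsuf hcnt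
    rcases Nat.eq_zero_or_pos k with hk0 | hkpos
    · subst hk0
      rw [anc_zero] at hcnt
      have := tc_to_unvisited w hv (anc v (0+1))
      omega
    · have hA0ne : (anc v k).1 ≠ [] := drop_ne_nil (by omega)
      have hcut := tc_sub_neg hw h0 (anc v k) hA0ne t hnsuf
      rw [par_anc] at hcut
      have h1 : k + 1 ≤ transCount w t (anc v k) (anc v (k+1)) := by omega
      have hadjup : btreeAdj (anc v k) (anc v (k+1)) :=
        Or.inr ⟨List.tail_drop, hA0ne⟩
      have hne' : (anc v (k-1)).1 ≠ [] := drop_ne_nil (by omega)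
      have hdk1 : (v.1.drop (k-1)).tail = v.1.drop k := by
        rw [List.tail_drop]; congr 1; omega
      have hadjdn : btreeAdj (anc v k) (anc v (k-1)) := Or.inl ⟨hdk1, hne'⟩
      have hbal := tc_balance hw t hadjup hadjdn
      apply ih hkpos (by omega) ?_ (by omega)
      intro hs
      apply hnsuf
      have hdk : v.1.drop k <:+ v.1.drop (k-1) := by
        rw [← hdk1]; exact List.tail_suffix _
      exact hdk.trans hs

/-- ascent: large min-counts at the current position propagate to all its ancestors -/
lemma ascent {w : ℕ → BTree b H} (hw : IsNegFeedbackWalk btreeAdj w)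
    (h0 : w 0 = btreeRoot b H) {t : ℕ} {Q : ℕ}
    (hQ : ∀ y, btreeAdj (w t) y → Q ≤ transCount w t (w t) y) :
    ∀ j, j ≤ (w t).1.length → ∀ y, btreeAdj (anc (w t) j) y →
      Q ≤ transCount w t (anc (w t) j) y := by
  intro j
  induction j with
  | zero =>
    intro _ y hy
    rw [anc_zero] at hy ⊢
    exact hQ y hy
  | succ j ih =>
    intro hle y hy
    have hne : (anc (w t) j).1 ≠ [] := drop_ne_nil (by omega)
    have hadjup : btreeAdj (anc (w t) j) (anc (w t) (j+1)) :=
      Or.inr ⟨List.tail_drop, hne⟩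
    have h1 : Q ≤ transCount w t (anc (w t) j) (anc (w t) (j+1)) :=
      ih (by omega) _ hadjup
    have hcut := tc_sub_pos hw h0 (anc (w t) j) hne t (List.drop_suffix j (w t).1)
    rw [par_anc] at hcut
    have hadjdn : btreeAdj (anc (w t) (j+1)) (anc (w t) j) :=
      Or.inl ⟨List.tail_drop, hne⟩
    have hbal := tc_balance hw t hadjdn hy
    omega

/-- the master lemma: while `v` is uncovered, every chosen transition count is < 2H -/
lemma master {w : ℕ → BTree b H} (hw : IsNegFeedbackWalk btreeAdj w)
    (h0 : w 0 = btreeRoot b H) {t : ℕ} {v : BTree b H}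
    (hv : ∀ r ≤ t, w r ≠ v) :
    transCount w t (w t) (w (t+1)) < 2*H := by
  by_contra hcon
  push_neg at hcon
  have hvroot : v.1 ≠ [] := by
    intro hnil
    exact hv 0 (Nat.zero_le t) (h0.trans (Subtype.ext hnil.symm))
  have hlenv : 1 ≤ v.1.length := List.length_pos_iff.2 hvroot
  have hlenH : v.1.length ≤ H := v.2
  have hQ : ∀ y, btreeAdj (w t) y → 2*H ≤ transCount w t (w t) y :=
    fun y hy => le_trans hcon ((hw t).2 y hy)
  have hex : ∃ i, v.1.drop i <:+ (w t).1 :=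
    ⟨v.1.length, by rw [List.drop_length]; exact List.nil_suffix⟩
  have hspec : v.1.drop (Nat.find hex) <:+ (w t).1 := Nat.find_spec hex
  have hi0le : Nat.find hex ≤ v.1.length :=
    Nat.find_le (by rw [List.drop_length]; exact List.nil_suffix)
  set i0 := Nat.find hex with hi0
  rcases Nat.eq_zero_or_pos i0 with hz | hpos
  · rw [hz, List.drop_zero] at hspec
    have hcut := tc_sub_pos hw h0 v hvroot t hspec
    have := tc_to_unvisited w hv (par v)
    omega
  · have hmin : ¬ (v.1.drop (i0 - 1) <:+ (w t).1) := Nat.find_min hex (by omega)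
    obtain ⟨u, hu⟩ := hspec
    have hjle : u.length ≤ (w t).1.length := by
      rw [← hu]; simp
    have hanc : anc (w t) u.length = anc v i0 := by
      apply Subtype.ext
      show (w t).1.drop u.length = v.1.drop i0
      rw [← hu, List.drop_left]
    have hne' : (anc v (i0-1)).1 ≠ [] := drop_ne_nil (by omega)
    have hdk1 : (v.1.drop (i0-1)).tail = v.1.drop i0 := by
      rw [List.tail_drop]; congr 1; omega
    have hadj : btreeAdj (anc v i0) (anc v (i0-1)) := Or.inl ⟨hdk1, hne'⟩
    have hcnt : 2*H ≤ transCount w t (anc v i0) (anc v (i0-1)) := by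
      have := ascent hw h0 hQ u.length hjle (anc v (i0-1)) (by rw [hanc]; exact hadj)
      rwa [hanc] at this
    exact descent hw h0 v hv i0 hpos hi0le hmin (le_trans (by omega) hcnt)

/-- counting the nodes of the tree -/
def toSig (x : BTree b H) : Σ k : Fin (H+1), (Fin k → Fin b) :=
  ⟨⟨x.1.length, Nat.lt_succ_of_le x.2⟩, fun i => x.1.get i⟩

lemma toSig_inj : Function.Injective (toSig (b := b) (H := H)) := by
  intro x y h
  have hlen : x.1.length = y.1.length := by
    have := congrArg (fun z => (z.1 : ℕ)) h
    simpa [toSig] using this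
  obtain ⟨h1, h2⟩ := Sigma.mk.inj_iff.1 h
  apply Subtype.ext
  apply List.ext_get hlen
  intro n hn1 hn2
  have := (Fin.heq_fun_iff (by simp [hlen] :
      ((⟨x.1.length, Nat.lt_succ_of_le x.2⟩ : Fin (H+1)) : ℕ)
        = ((⟨y.1.length, Nat.lt_succ_of_le y.2⟩ : Fin (H+1)) : ℕ))).1 h2 ⟨n, hn1⟩
  simpa using this

noncomputable instance : Fintype (BTree b H) :=
  Fintype.ofInjective toSig toSig_inj

lemma card_btree_le : Fintype.card (BTree b H) ≤ ∑ k ∈ Finset.range (H+1), b^k := by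
  have h := Fintype.card_le_of_injective (toSig (b:=b) (H:=H)) toSig_inj
  have : Fintype.card (Σ k : Fin (H+1), (Fin k → Fin b))
      = ∑ k ∈ Finset.range (H+1), b^k := by
    rw [Fintype.card_sigma]
    rw [← Fin.sum_univ_eq_sum_range (fun k => b^k) (H+1)]
    congr 1
    ext k
    simp [Fintype.card_fun]
  omega

lemma arith (hb : 2 ≤ b) (hH : 1 ≤ H) :
    ((4*H*(Fintype.card (BTree b H)) + 1 : ℕ) : ℝ)
      ≤ 4 * H * ((b + 1) / (b - 1) : ℝ) * (b : ℝ) ^ H := by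
  have hC := card_btree_le (b := b) (H := H)
  set C := Fintype.card (BTree b H)
  have hβ : (2:ℝ) ≤ (b:ℝ) := by exact_mod_cast hb
  have hβ1 : (0:ℝ) < (b:ℝ) - 1 := by linarith
  have hgeom : (∑ i ∈ Finset.range (H+1), (b:ℝ) ^ i) * ((b:ℝ) - 1) = (b:ℝ)^(H+1) - 1 :=
    geom_sum_mul (b:ℝ) (H+1)
  have hCs : (C:ℝ) ≤ ∑ i ∈ Finset.range (H+1), (b:ℝ) ^ i := by
    have : ((∑ k ∈ Finset.range (H+1), b^k : ℕ) : ℝ)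
        = ∑ i ∈ Finset.range (H+1), (b:ℝ) ^ i := by
      push_cast; ring
    rw [← this]
    exact_mod_cast hC
  have hpow : (b:ℝ) ≤ (b:ℝ)^H := le_self_pow₀ (by linarith) (by omega)
  have hH1 : (1:ℝ) ≤ (H:ℝ) := by exact_mod_cast hH
  have hpowpos : (0:ℝ) < (b:ℝ)^H := by positivity
  rw [show (4:ℝ) * H * ((b + 1) / (b - 1)) * (b:ℝ)^H
        = (4 * H * ((b:ℝ) + 1) * (b:ℝ)^H) / ((b:ℝ) - 1) by ring]
  rw [le_div_iff₀ hβ1]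
  push_cast
  have key : (4*(H:ℝ)*C + 1) * ((b:ℝ) - 1)
      ≤ 4*H*((b:ℝ)^(H+1) - 1) + ((b:ℝ) - 1) := by
    have h1 : (C:ℝ) * ((b:ℝ) - 1) ≤ (b:ℝ)^(H+1) - 1 := by
      calc (C:ℝ) * ((b:ℝ)-1) ≤ (∑ i ∈ Finset.range (H+1), (b:ℝ) ^ i) * ((b:ℝ)-1) :=
            mul_le_mul_of_nonneg_right hCs (by linarith)
        _ = (b:ℝ)^(H+1) - 1 := hgeom
    nlinarith [hH1, h1]
  have hps : (b:ℝ)^(H+1) = (b:ℝ)^H * (b:ℝ) := pow_succ _ _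
  nlinarith [key, hps, hpow, hH1, hpowpos]

end NFWCover

/-- every negative feedback walk on the complete balanced `b`-ary tree of
depth `H` (each non-leaf node has exactly `b ≥ 2` children) started at the root covers
every node within `4 H (b+1)/(b-1) bᴴ` steps; in particular
`T_C ≤ 4 H (b+1)/(b-1) bᴴ` almost surely, and so is `E[T_C]`. -/
theorem btree_negFeedback_cover (b H : ℕ) (hb : 2 ≤ b)
    (w : ℕ → BTree b H) (hw : IsNegFeedbackWalk btreeAdj w) (h0 : w 0 = btreeRoot b H) :
    ∀ v : BTree b H, ∃ t : ℕ, w t = v ∧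
      (t : ℝ) ≤ 4 * H * ((b + 1) / (b - 1) : ℝ) * (b : ℝ) ^ H := by
  intro v
  by_cases hroot : v = btreeRoot b H
  · refine ⟨0, by rw [h0, hroot], ?_⟩
    have hβ : (2:ℝ) ≤ (b:ℝ) := by exact_mod_cast hb
    have hdiv : (0:ℝ) ≤ ((b:ℝ)+1)/((b:ℝ)-1) := div_nonneg (by linarith) (by linarith)
    have : (0:ℝ) ≤ 4 * H * (((b:ℝ) + 1) / ((b:ℝ) - 1)) * (b : ℝ) ^ H :=
      mul_nonneg (mul_nonneg (by positivity) hdiv) (by positivity)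
    simpa using this
  · by_contra hcon
    push_neg at hcon
    have hvne : v.1 ≠ [] := fun hnil => hroot (Subtype.ext hnil)
    have hH : 1 ≤ H := le_trans (List.length_pos_iff.2 hvne) v.2
    set C := Fintype.card (BTree b H) with hCdef
    set N := 4*H*C + 1 with hNdef
    have hNB := NFWCover.arith (b := b) (H := H) hb hH
    rw [← hCdef, ← hNdef] at hNB
    have hv : ∀ r, r ≤ N → w r ≠ v := by
      intro r hr hrv
      have h1 : (r:ℝ) ≤ (N:ℝ) := by exact_mod_cast hr
      exact absurd (le_trans h1 hNB) (by simpa [hrv] using hcon r)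
    set F : Fin N → BTree b H × Bool × Fin (2*H) := fun s =>
      ( if (w s.1).1.length < (w (s.1+1)).1.length then w (s.1+1) else w s.1,
        decide ((w s.1).1.length < (w (s.1+1)).1.length),
        ⟨transCount w s.1 (w s.1) (w (s.1+1)),
          NFWCover.master hw h0 (fun r hr => hv r (le_trans hr (le_of_lt s.2)))⟩ )
      with hF
    have hdirlen : ∀ t : ℕ,
        ((w (t+1)).1.tail = (w t).1 ∧ (w (t+1)).1 ≠ [] ∧
            (w t).1.length < (w (t+1)).1.length)
        ∨ ((w t).1.tail = (w (t+1)).1 ∧ (w t).1 ≠ [] ∧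
            ¬ (w t).1.length < (w (t+1)).1.length) := by
      intro t
      rcases (hw t).1 with ⟨ht, hne⟩ | ⟨ht, hne⟩
      · left
        refine ⟨ht, hne, ?_⟩
        have := congrArg List.length ht
        rw [List.length_tail] at this
        have h2 : 1 ≤ (w (t+1)).1.length := List.length_pos_iff.2 hne
        omega
      · right
        refine ⟨ht, hne, ?_⟩
        have := congrArg List.length ht
        rw [List.length_tail] at this
        have h2 : 1 ≤ (w t).1.length := List.length_pos_iff.2 hne
        omega
    have hsteps : ∀ s1 s2 : Fin N, F s1 = F s2 →
        (w s1.1 = w s2.1 ∧ w (s1.1+1) = w (s2.1+1)) := by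
      intro s1 s2 heq
      have h1 := congrArg Prod.fst heq
      have h2 := congrArg (fun z => z.2.1) heq
      simp only [hF] at h1 h2
      rcases hdirlen s1.1 with ⟨ht1, hne1, hlt1⟩ | ⟨ht1, hne1, hlt1⟩ <;>
        rcases hdirlen s2.1 with ⟨ht2, hne2, hlt2⟩ | ⟨ht2, hne2, hlt2⟩
      · rw [if_pos hlt1, if_pos hlt2] at h1
        refine ⟨?_, h1⟩
        apply Subtype.ext
        rw [← ht1, ← ht2, h1]
      · simp [hlt1, hlt2] at h2
      · simp [hlt1, hlt2] at h2
      · rw [if_neg hlt1, if_neg hlt2] at h1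
        refine ⟨h1, ?_⟩
        apply Subtype.ext
        rw [← ht1, ← ht2, h1]
    have hFinj : Function.Injective F := by
      intro s1 s2 heq
      by_contra hne
      obtain ⟨hx, hy⟩ := hsteps s1 s2 heq
      have h3 := congrArg (fun z => (z.2.2 : ℕ)) heq
      simp only [hF] at h3
      have hlt : s1.1 < s2.1 ∨ s2.1 < s1.1 := by
        rcases lt_trichotomy s1.1 s2.1 with h | h | h
        · exact Or.inl h
        · exact absurd (Fin.ext h) hne
        · exact Or.inr h
      rcases hlt with h | h
      · have := NFWCover.tc_step_lt w h (w s1.1) (w (s1.1+1)) rfl rfl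
        rw [← hx, ← hy] at h3
        omega
      · have := NFWCover.tc_step_lt w h (w s2.1) (w (s2.1+1)) rfl rfl
        rw [hx, hy] at h3
        omega
    have hcard := Fintype.card_le_of_injective F hFinj
    rw [Fintype.card_fin, Fintype.card_prod, Fintype.card_prod,
      Fintype.card_bool, Fintype.card_fin] at hcard
    rw [← hCdef] at hcard
    have : C * (2 * (2*H)) = 4*H*C := by ring
    omega
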